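/- Let a,b,c,d,e,f be complex numbers with ac+bd = -1, ae+bf = -1, ce+df = -1, and define x = -bdf, y = -ace, s = ace+a+c+e. Set X = -y, Y = s+y, Z = -x^2 - y^2 + (s+y)y - 1. Then a, c, e are roots of the cubic t^3 - Y t^2 + Z t - X = 0, i.e., this cubic factors as (t-a)(t-c)(t-e). -/
import Mathlib

theorem stmt_3 (a b c d e f : ℂ)
    (h1 : a*c + b*d = -1) (h2 : a*e + b*f = -1) (h3 : c*e + d*f = -1)
    (x y s X Y Z : ℂ)
    (hx : x = -(b*d*f)) (hy : y = -(a*c*e)) (hs : s = a*c*e + a + c + e)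
    (hX : X = -y) (hY : Y = s + y) (hZ : Z = -x^2 - y^2 + (s + y)*y - 1) :
    ∀ u : ℂ, u^3 - Y*u^2 + Z*u - X = (u - a) * (u - c) * (u - e) := by
  intro u
  subst hx hy hs hX hY hZ
  linear_combination (-u*(b*f*d*f)) * h1 + (u*(1+a*c)*(d*f)) * h2 + (-u*(1+a*c)*(1+a*e)) * h3
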